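/- Let h : ℝⁿ → ℝ be a twice continuously differentiable function that is homogeneous of degree d for an integer d ≥ 2. Then the determinant of the bordered Hessian of h satisfies D_h(x) = (−d/(d−1)) · h(x) · det(∇²h(x)) for all x ∈ ℝⁿ. -/

import Mathlib

open scoped BigOperators

variable {n : ℕ}

lemma line_hasDerivAt (x : EuclideanSpace ℝ (Fin n)) (l : ℝ) :
    HasDerivAt (fun t : ℝ => t • x) x l := by
  simpa using (hasDerivAt_id l).smul_const x

lemma euclid_decomp (x : EuclideanSpace ℝ (Fin n)) :
    x = ∑ i, x i • EuclideanSpace.single i (1:ℝ) := by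
  ext j
  have := Finset.sum_apply j Finset.univ (fun i => x i • EuclideanSpace.single i (1:ℝ))
  rw [show (∑ i, x i • EuclideanSpace.single i (1:ℝ)) j = ∑ i, (x i • EuclideanSpace.single i (1:ℝ)) j from by rw [WithLp.ofLp_sum]; exact this]
  simp [EuclideanSpace.single_apply]

-- Euler 1
lemma euler1 (h : EuclideanSpace ℝ (Fin n) → ℝ) (d : ℕ)
    (hC2 : ContDiff ℝ 2 h)
    (hhom : ∀ (x : EuclideanSpace ℝ (Fin n)) (l : ℝ), h (l • x) = l ^ d * h x)
    (x : EuclideanSpace ℝ (Fin n)) :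
    fderiv ℝ h x x = d * h x := by
  have hdiff : Differentiable ℝ h := hC2.differentiable two_ne_zero
  have h1 : HasDerivAt (fun l : ℝ => h (l • x)) (fderiv ℝ h x x) 1 := by
    have := (hdiff ((1:ℝ) • x)).hasFDerivAt.comp_hasDerivAt 1 (line_hasDerivAt x 1)
    simpa [Function.comp_def] using this
  have h2 : HasDerivAt (fun l : ℝ => l ^ d * h x) ((d : ℝ) * h x) 1 := by
    simpa using (hasDerivAt_pow d (1:ℝ)).mul_const (h x)
  have h1' : HasDerivAt (fun l : ℝ => l ^ d * h x) (fderiv ℝ h x x) 1 := by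
    simpa only [hhom x] using h1
  exact h1'.unique h2

-- homogeneity of the gradient for l ≠ 0
lemma gradB (h : EuclideanSpace ℝ (Fin n) → ℝ) (d : ℕ) (hd : 2 ≤ d)
    (hC2 : ContDiff ℝ 2 h)
    (hhom : ∀ (x : EuclideanSpace ℝ (Fin n)) (l : ℝ), h (l • x) = l ^ d * h x)
    (x : EuclideanSpace ℝ (Fin n)) (l : ℝ) (hl : l ≠ 0) (v : EuclideanSpace ℝ (Fin n)) :
    fderiv ℝ h (l • x) v = l ^ (d - 1) * fderiv ℝ h x v := by
  have hdiff : Differentiable ℝ h := hC2.differentiable two_ne_zero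
  have hlin : HasFDerivAt (fun y : EuclideanSpace ℝ (Fin n) => l • y)
      (l • ContinuousLinearMap.id ℝ (EuclideanSpace ℝ (Fin n))) x :=
    (l • ContinuousLinearMap.id ℝ (EuclideanSpace ℝ (Fin n))).hasFDerivAt
  have h1 : HasFDerivAt (fun y => h (l • y))
      ((fderiv ℝ h (l • x)).comp (l • ContinuousLinearMap.id ℝ (EuclideanSpace ℝ (Fin n)))) x :=
    (hdiff (l • x)).hasFDerivAt.comp x hlin
  have h2 : HasFDerivAt (fun y => l ^ d * h y) (l ^ d • fderiv ℝ h x) x :=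
    (hdiff x).hasFDerivAt.const_mul (l ^ d)
  have h1' : HasFDerivAt (fun y => l ^ d * h y)
      ((fderiv ℝ h (l • x)).comp (l • ContinuousLinearMap.id ℝ (EuclideanSpace ℝ (Fin n)))) x := by
    simpa only [fun y => hhom y l] using h1
  have heq := h1'.unique h2
  have := congrArg (fun (T : EuclideanSpace ℝ (Fin n) →L[ℝ] ℝ) => T v) heq
  simp only [ContinuousLinearMap.comp_apply, ContinuousLinearMap.smul_apply,
    ContinuousLinearMap.id_apply, ContinuousLinearMap.coe_smul', Pi.smul_apply] at this
  have hld : l ^ d = l * l ^ (d - 1) := by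
    rw [← pow_succ']
    congr 1
    omega
  have h3 : l * fderiv ℝ h (l • x) v = l * (l ^ (d-1) * fderiv ℝ h x v) := by
    rw [show fderiv ℝ h (l • x) (l • v) = l * fderiv ℝ h (l • x) v by
      rw [map_smul]; rfl] at this
    rw [this, hld, smul_eq_mul]; ring
  exact mul_left_cancel₀ hl h3

-- Euler 2
lemma euler2 (h : EuclideanSpace ℝ (Fin n) → ℝ) (d : ℕ) (hd : 2 ≤ d)
    (hC2 : ContDiff ℝ 2 h)
    (hhom : ∀ (x : EuclideanSpace ℝ (Fin n)) (l : ℝ), h (l • x) = l ^ d * h x)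
    (x : EuclideanSpace ℝ (Fin n)) (v : EuclideanSpace ℝ (Fin n)) :
    fderiv ℝ (fderiv ℝ h) x x v = ((d : ℝ) - 1) * fderiv ℝ h x v := by
  have hC1 : ContDiff ℝ 1 (fderiv ℝ h) := hC2.fderiv_right (le_refl _)
  have hdiff : Differentiable ℝ (fderiv ℝ h) := hC1.differentiable one_ne_zero
  have h1 : HasDerivAt (fun l : ℝ => fderiv ℝ h (l • x)) (fderiv ℝ (fderiv ℝ h) x x) 1 := by
    have := (hdiff ((1:ℝ) • x)).hasFDerivAt.comp_hasDerivAt 1 (line_hasDerivAt x 1)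
    simpa [Function.comp_def] using this
  have h1v : HasDerivAt (fun l : ℝ => fderiv ℝ h (l • x) v)
      (fderiv ℝ (fderiv ℝ h) x x v) 1 := by
    have := (ContinuousLinearMap.apply ℝ ℝ v).hasFDerivAt.comp_hasDerivAt 1 h1
    simpa [Function.comp_def] using this
  have h2 : HasDerivAt (fun l : ℝ => l ^ (d-1) * fderiv ℝ h x v)
      (((d:ℝ) - 1) * fderiv ℝ h x v) 1 := by
    have := (hasDerivAt_pow (d-1) (1:ℝ)).mul_const (fderiv ℝ h x v)
    have hcast : ((d - 1 : ℕ) : ℝ) = (d : ℝ) - 1 := by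
      have : 1 ≤ d := by omega
      push_cast [this]; ring
    simpa [hcast] using this
  have h1'' : HasDerivAt (fun l : ℝ => l ^ (d-1) * fderiv ℝ h x v)
      (fderiv ℝ (fderiv ℝ h) x x v) 1 := by
    apply h1v.congr_of_eventuallyEq
    filter_upwards [eventually_ne_nhds one_ne_zero] with l hl
    exact (gradB h d hd hC2 hhom x l hl v).symm
  exact h1''.unique h2

lemma bordered (n : ℕ) (g v : Fin n → ℝ) (Hm : Matrix (Fin n) (Fin n) ℝ)
    (a s : ℝ) (ha : a ≠ 0)
    (hg : ∑ i, v i * g i = s)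
    (hH : ∀ j, ∑ i, v i * Hm i j = a * g j) :
    (Matrix.of (Fin.cons (Fin.cons (0:ℝ) g) (fun i => Fin.cons (g i) (Hm i)))).det
      = (-s / a) * Hm.det := by
  set M := Matrix.of (Fin.cons (Fin.cons (0:ℝ) g) (fun i => Fin.cons (g i) (Hm i))) with hM
  set c : Fin (n+1) → ℝ := Fin.cons 0 (fun i => v i / a) with hc
  set r : Fin (n+1) → ℝ := Fin.cons (-s/a) 0 with hr
  have hM0 : M 0 = r + ∑ i : Fin (n+1), c i • M i := by
    funext j
    rw [Pi.add_apply, Finset.sum_apply]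
    refine Fin.cases ?_ (fun k => ?_) j
    · have hsum : ∑ i : Fin (n+1), (c i • M i) 0 = s / a := by
        rw [Fin.sum_univ_succ]
        simp only [hM, hc, Matrix.of_apply, Fin.cons_zero, Fin.cons_succ, Pi.smul_apply,
          smul_eq_mul, mul_zero, zero_add]
        simp_rw [div_mul_eq_mul_div, ← Finset.sum_div, hg]
      rw [hsum]
      simp only [hM, hr, Matrix.of_apply, Fin.cons_zero]
      field_simp
      ring
    · have hsum : ∑ i : Fin (n+1), (c i • M i) k.succ = g k := by
        rw [Fin.sum_univ_succ]
        simp only [hM, hc, Matrix.of_apply, Fin.cons_zero, Fin.cons_succ, Pi.smul_apply,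
          smul_eq_mul, zero_mul, zero_add]
        simp_rw [div_mul_eq_mul_div, ← Finset.sum_div, hH k]
        field_simp
      rw [hsum]
      simp [hM, hr]
  have step1 : M.det = (M.updateRow 0 r).det := by
    conv_lhs => rw [← Matrix.updateRow_eq_self M 0, hM0]
    rw [Matrix.det_updateRow_add, Matrix.det_updateRow_sum]
    simp [hc]
  have step2 : (M.updateRow 0 r).det = (-s/a) * Hm.det := by
    rw [Matrix.det_succ_row_zero]
    rw [Finset.sum_eq_single 0]
    · have hsub : (M.updateRow 0 r).submatrix Fin.succ (Fin.succAbove 0) = Hm := by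
        funext i j
        simp [Matrix.submatrix_apply, Matrix.updateRow_ne (Fin.succ_ne_zero i), hM,
          Fin.succAbove_zero]
      rw [hsub]
      simp [Matrix.updateRow_self, hr]
    · intro j _ hj
      rcases Fin.eq_succ_of_ne_zero hj with ⟨k, rfl⟩
      simp [Matrix.updateRow_self, hr]
    · intro habs
      exact absurd (Finset.mem_univ _) habs
  rw [step1, step2]

theorem stmt_8 (n : ℕ) (h : EuclideanSpace ℝ (Fin n) → ℝ) (d : ℕ) (hd : 2 ≤ d)
    (hC2 : ContDiff ℝ 2 h)
    (hhom : ∀ (x : EuclideanSpace ℝ (Fin n)) (l : ℝ), h (l • x) = l ^ d * h x)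
    (x : EuclideanSpace ℝ (Fin n)) :
    Matrix.det (Matrix.of (Fin.cons
        (Fin.cons (0 : ℝ) (fun j : Fin n => fderiv ℝ h x (EuclideanSpace.single j 1)))
        (fun i : Fin n => Fin.cons (fderiv ℝ h x (EuclideanSpace.single i 1))
          (fun j : Fin n =>
            fderiv ℝ (fderiv ℝ h) x (EuclideanSpace.single i 1) (EuclideanSpace.single j 1))))) =
      (-(d : ℝ) / ((d : ℝ) - 1)) * h x *
        Matrix.det (Matrix.of (fun i j : Fin n =>
          fderiv ℝ (fderiv ℝ h) x (EuclideanSpace.single i 1) (EuclideanSpace.single j 1))) := by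
  have hd2 : (2:ℝ) ≤ (d:ℝ) := by exact_mod_cast hd
  have ha : ((d:ℝ) - 1) ≠ 0 := by linarith
  have hdec := euclid_decomp x
  have hg : ∑ i, x i * fderiv ℝ h x (EuclideanSpace.single i (1:ℝ)) = (d:ℝ) * h x := by
    have hmap : fderiv ℝ h x (∑ i, x i • EuclideanSpace.single i (1:ℝ))
        = ∑ i, x i * fderiv ℝ h x (EuclideanSpace.single i (1:ℝ)) := by
      rw [map_sum]
      simp [smul_eq_mul]
    rw [← hmap, ← hdec]
    exact euler1 h d hC2 hhom x
  have hH : ∀ j, ∑ i, x i * fderiv ℝ (fderiv ℝ h) x (EuclideanSpace.single i (1:ℝ))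
        (EuclideanSpace.single j (1:ℝ))
      = ((d:ℝ) - 1) * fderiv ℝ h x (EuclideanSpace.single j (1:ℝ)) := by
    intro j
    have hmap : fderiv ℝ (fderiv ℝ h) x (∑ i, x i • EuclideanSpace.single i (1:ℝ))
          (EuclideanSpace.single j (1:ℝ))
        = ∑ i, x i * fderiv ℝ (fderiv ℝ h) x (EuclideanSpace.single i (1:ℝ))
          (EuclideanSpace.single j (1:ℝ)) := by
      rw [map_sum]
      simp [ContinuousLinearMap.sum_apply, smul_eq_mul]
    rw [← hmap, ← hdec]
    exact euler2 h d hd hC2 hhom x _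
  have hb := bordered n (fun j => fderiv ℝ h x (EuclideanSpace.single j (1:ℝ)))
    (fun i => x i)
    (Matrix.of fun i j : Fin n =>
      fderiv ℝ (fderiv ℝ h) x (EuclideanSpace.single i 1) (EuclideanSpace.single j 1))
    ((d:ℝ) - 1) ((d:ℝ) * h x) ha hg hH
  exact hb.trans (by ring)
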